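/- Let H be a self-adjoint operator on a Hilbert space ℋ, T > 0, δ > 0, and let {E(t)}_{t ∈ [0, δ)} be a family of bounded operators on ℋ with E(0) = I. Let P be a bounded operator commuting with e^{−isH} for all s. Assume (stability) ‖E(t)‖ ≤ e^{Ct} for all t ∈ (0, δ), and (local error) ‖(E(t) − e^{−itH})P‖ ≤ C_ε t^{1+ε} for all t ∈ (0, δ), where ε > 0. Then for every t ∈ (0, T] and every partition Δ = (t₁, ..., t_L) of t with each t_j ∈ (0, δ), the telescoping estimate ‖(E(t_L)⋯E(t₁) − e^{−itH})P‖ ≤ e^{CT} C_ε t |Δ|^ε holds, where |Δ| = max_j t_j. -/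

import Mathlib

open Set

private lemma sum_map_mul_right' (l : List ℝ) (c : ℝ) :
    (l.map (fun u => u * c)).sum = l.sum * c := by
  induction l with
  | nil => simp
  | cons a rest ih => simp [ih, add_mul]

/-- the telescoping estimate. Given a one-parameter unitary group `U`, a family
`E(t)` of bounded operators with `E(0) = 1` satisfying stability `‖E(t)‖ ≤ e^{Ct}` and the
local error bound `‖(E(t) − U(t))P‖ ≤ C_ε t^{1+ε}` (P bounded, commuting with the group), one
has for every `t ∈ (0,T]` and every partition `(t₁,…,t_L)` of `t` with all `t_j ∈ (0,δ)`:
`‖(E(t_L)⋯E(t₁) − U(t))P‖ ≤ e^{CT} C_ε t |Δ|^ε`. -/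
theorem telescoping_estimate
    {ℋ : Type*} [NormedAddCommGroup ℋ] [InnerProductSpace ℂ ℋ] [CompleteSpace ℋ]
    (U : ℝ → ℋ →L[ℂ] ℋ) (hU0 : U 0 = 1)
    (hUgrp : ∀ s σ : ℝ, U (s + σ) = U s ∘L U σ)
    (hUnorm : ∀ (s : ℝ) (x : ℋ), ‖U s x‖ = ‖x‖)
    (P : ℋ →L[ℂ] ℋ) (hP : ∀ s : ℝ, P ∘L U s = U s ∘L P)
    (E : ℝ → ℋ →L[ℂ] ℋ) (hE0 : E 0 = 1)
    (T δ C Cε ε : ℝ) (hT : 0 < T) (hδ : 0 < δ) (hC : 0 ≤ C) (hCε : 0 ≤ Cε) (hε : 0 < ε)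
    (hstab : ∀ t ∈ Ioo (0 : ℝ) δ, ‖E t‖ ≤ Real.exp (C * t))
    (herr : ∀ t ∈ Ioo (0 : ℝ) δ, ‖(E t - U t) ∘L P‖ ≤ Cε * t ^ (1 + ε)) :
    ∀ t ∈ Ioc (0 : ℝ) T, ∀ l : List ℝ, l ≠ [] → (∀ s ∈ l, s ∈ Ioo (0 : ℝ) δ) →
      l.sum = t →
      ‖((l.map E).prod - U t) ∘L P‖ ≤ Real.exp (C * T) * Cε * t * (l.foldr max 0) ^ ε := by
  have hU1 : ∀ s : ℝ, ‖U s‖ ≤ 1 := fun s =>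
    ContinuousLinearMap.opNorm_le_bound _ zero_le_one (fun x => by rw [hUnorm, one_mul])
  -- key induction
  have key : ∀ l : List ℝ, (∀ s ∈ l, s ∈ Ioo (0 : ℝ) δ) →
      ‖((l.map E).prod - U l.sum) ∘L P‖ ≤
        Real.exp (C * l.sum) * Cε * (l.map (fun s => s ^ (1 + ε))).sum := by
    intro l
    induction l with
    | nil =>
      intro _
      simp [hU0]
    | cons a rest ih =>
      intro h
      have ha : a ∈ Ioo (0 : ℝ) δ := h a List.mem_cons_self
      have hrest : ∀ s ∈ rest, s ∈ Ioo (0 : ℝ) δ := fun s hs => h s (List.mem_cons_of_mem _ hs)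
      have hs0 : (0 : ℝ) ≤ rest.sum := List.sum_nonneg (fun s hs => (hrest s hs).1.le)
      set X := (rest.map E).prod with hX
      set s := rest.sum with hsdef
      have heq : ((((a :: rest).map E).prod) - U ((a :: rest).sum)) ∘L P
          = (E a) ∘L ((X - U s) ∘L P) + (E a - U a) ∘L (U s ∘L P) := by
        simp only [List.map_cons, List.prod_cons, List.sum_cons, ← hX, ← hsdef, hUgrp a s]
        simp only [← ContinuousLinearMap.mul_def]
        noncomm_ring
      rw [heq]
      have hrw : U s ∘L P = P ∘L U s := (hP s).symm
      have h1 : ‖(E a) ∘L ((X - U s) ∘L P)‖ ≤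
          Real.exp (C * a) * (Real.exp (C * s) * Cε * (rest.map (fun u => u ^ (1 + ε))).sum) := by
        refine le_trans (ContinuousLinearMap.opNorm_comp_le _ _) ?_
        exact mul_le_mul (hstab a ha) (ih hrest) (norm_nonneg _) (Real.exp_nonneg _)
      have h2 : ‖(E a - U a) ∘L (U s ∘L P)‖ ≤ Cε * a ^ (1 + ε) := by
        rw [hrw, ← ContinuousLinearMap.comp_assoc]
        refine le_trans (ContinuousLinearMap.opNorm_comp_le _ _) ?_
        calc ‖(E a - U a) ∘L P‖ * ‖U s‖ ≤ (Cε * a ^ (1 + ε)) * 1 :=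
              mul_le_mul (herr a ha) (hU1 s) (norm_nonneg _)
                (mul_nonneg hCε (Real.rpow_nonneg ha.1.le _))
          _ = Cε * a ^ (1 + ε) := mul_one _
      refine le_trans (norm_add_le _ _) ?_
      have hSr : (0 : ℝ) ≤ (rest.map (fun u => u ^ (1 + ε))).sum :=
        List.sum_nonneg (by
          intro x hx
          obtain ⟨u, hu, rfl⟩ := List.mem_map.mp hx
          exact Real.rpow_nonneg (hrest u hu).1.le _)
      have hA1 : (1 : ℝ) ≤ Real.exp (C * (a + s)) := by
        have : 0 ≤ C * (a + s) := mul_nonneg hC (by linarith [ha.1])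
        simpa using Real.exp_le_exp.mpr this
      have hexp : Real.exp (C * a) * Real.exp (C * s) = Real.exp (C * (a + s)) := by
        rw [← Real.exp_add]; ring_nf
      have haε : (0 : ℝ) ≤ Cε * a ^ (1 + ε) :=
        mul_nonneg hCε (Real.rpow_nonneg ha.1.le _)
      have hgoal : Real.exp (C * a) * (Real.exp (C * s) * Cε * (rest.map (fun u => u ^ (1 + ε))).sum)
            + Cε * a ^ (1 + ε)
          ≤ Real.exp (C * ((a :: rest).sum)) * Cε * ((a :: rest).map (fun u => u ^ (1 + ε))).sum := by
        simp only [List.sum_cons, List.map_cons, ← hsdef]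
        have e1 : Real.exp (C * a) * (Real.exp (C * s) * Cε * (rest.map (fun u => u ^ (1 + ε))).sum)
            = Real.exp (C * (a + s)) * Cε * (rest.map (fun u => u ^ (1 + ε))).sum := by
          rw [← hexp]; ring
        rw [e1]
        have e2 : Cε * a ^ (1 + ε) ≤ Real.exp (C * (a + s)) * (Cε * a ^ (1 + ε)) :=
          le_mul_of_one_le_left haε hA1
        nlinarith [Real.exp_nonneg (C * (a + s))]
      linarith
  intro t ht l hne hl hsum
  set M := l.foldr max 0 with hMdef
  have hMle : ∀ x ∈ l, x ≤ M := by
    rw [hMdef]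
    clear hMdef hsum hne hl
    induction l with
    | nil => simp
    | cons a rest ih =>
      intro x hx
      rcases List.mem_cons.mp hx with rfl | hx
      · exact le_max_left _ _
      · exact le_trans (ih x hx) (le_max_right _ _)
  have hM0 : (0 : ℝ) ≤ M := by
    rw [hMdef]
    clear hMdef hMle hsum hne hl
    induction l with
    | nil => simp
    | cons a rest ih => exact le_trans ih (le_max_right _ _)
  have hkey := key l hl
  rw [hsum] at hkey
  have hS : (l.map (fun u => u ^ (1 + ε))).sum ≤ t * M ^ ε := by
    have h1 : (l.map (fun u => u ^ (1 + ε))).sum ≤ (l.map (fun u => u * M ^ ε)).sum := by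
      refine List.sum_le_sum ?_
      intro u hu
      have hu0 : 0 < u := (hl u hu).1
      rw [Real.rpow_add hu0, Real.rpow_one]
      exact mul_le_mul_of_nonneg_left
        (Real.rpow_le_rpow hu0.le (hMle u hu) hε.le) hu0.le
    rw [sum_map_mul_right', hsum] at h1
    exact h1
  calc ‖((l.map E).prod - U t) ∘L P‖
      ≤ Real.exp (C * t) * Cε * (l.map (fun u => u ^ (1 + ε))).sum := hkey
    _ ≤ Real.exp (C * T) * Cε * (t * M ^ ε) := by
        have he : Real.exp (C * t) ≤ Real.exp (C * T) :=
          Real.exp_le_exp.mpr (mul_le_mul_of_nonneg_left ht.2 hC)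
        have := mul_le_mul (mul_le_mul he le_rfl hCε (Real.exp_nonneg _)) hS
          (List.sum_nonneg (by
            intro x hx
            obtain ⟨u, hu, rfl⟩ := List.mem_map.mp hx
            exact Real.rpow_nonneg (hl u hu).1.le _))
          (mul_nonneg (Real.exp_nonneg _) hCε)
        exact this
    _ = Real.exp (C * T) * Cε * t * M ^ ε := by ring
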